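/- Let Q(S) = S² - Ψ₁ᵀS + Ψ₂ᵀ be a monic quadratic matrix polynomial in N×N matrices, and suppose S₁ and S₂ are two solutions of Q(S) = 0 such that every eigenvalue of S₁ has strictly larger absolute value than every eigenvalue of S₂ (S₁ dominant, S₂ minimal). Then the block Vandermonde matrix V = [[I, I],[S₁, S₂]] (a 2N×2N matrix) is nonsingular, and in particular S₂ - S₁ is invertible. -/

import Mathlib

open Matrix

/-- If `S₁` and `S₂` solve the monic quadratic matrix polynomial
`S² - Ψ₁ᵀ S + Ψ₂ᵀ = 0` and every eigenvalue of `S₁` has strictly larger modulus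
than every eigenvalue of `S₂`, then the block Vandermonde matrix
`[[I, I], [S₁, S₂]]` is nonsingular; in particular `S₂ - S₁` is invertible. -/
theorem stmt1 {N : ℕ} (Ψ₁ Ψ₂ S₁ S₂ : Matrix (Fin N) (Fin N) ℂ)
    (hS₁ : S₁ ^ 2 - Ψ₁ᵀ * S₁ + Ψ₂ᵀ = 0)
    (hS₂ : S₂ ^ 2 - Ψ₁ᵀ * S₂ + Ψ₂ᵀ = 0)
    (hdom : ∀ μ ∈ spectrum ℂ S₂, ∀ lam ∈ spectrum ℂ S₁, ‖μ‖ < ‖lam‖) :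
    IsUnit (Matrix.fromBlocks (1 : Matrix (Fin N) (Fin N) ℂ) 1 S₁ S₂) ∧ IsUnit (S₂ - S₁) := by
  have e1 : S₁ * S₁ = Ψ₁ᵀ * S₁ - Ψ₂ᵀ := by
    rw [pow_two, sub_add_eq_add_sub, sub_eq_zero] at hS₁
    rw [eq_sub_iff_add_eq, hS₁]
  have e2 : S₂ * S₂ = Ψ₁ᵀ * S₂ - Ψ₂ᵀ := by
    rw [pow_two, sub_add_eq_add_sub, sub_eq_zero] at hS₂
    rw [eq_sub_iff_add_eq, hS₂]
  have key : IsUnit (S₂ - S₁) := by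
    rw [Matrix.isUnit_iff_isUnit_det, isUnit_iff_ne_zero]
    intro hdet
    obtain ⟨v, hv, hv0⟩ := (Matrix.exists_mulVec_eq_zero_iff.mpr hdet)
    set f := Matrix.toLinAlgEquiv' (R := ℂ) (n := Fin N) S₁ with hf
    set g := Matrix.toLinAlgEquiv' (R := ℂ) (n := Fin N) S₂ with hg
    set K : Submodule ℂ (Fin N → ℂ) := LinearMap.ker ((f : (Fin N → ℂ) →ₗ[ℂ] Fin N → ℂ) - g) with hK
    have memK : ∀ x, x ∈ K ↔ S₁ *ᵥ x = S₂ *ᵥ x := by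
      intro x
      simp [hK, hf, hg, LinearMap.mem_ker, sub_eq_zero, Matrix.toLinAlgEquiv'_apply]
    have hvK : v ∈ K := by
      rw [memK]
      have := hv0
      rwa [Matrix.sub_mulVec, sub_eq_zero, eq_comm] at this
    have hinv : ∀ x ∈ K, (f : (Fin N → ℂ) →ₗ[ℂ] Fin N → ℂ) x ∈ K := by
      intro x hx
      rw [memK] at hx ⊢
      have hfx : (f : (Fin N → ℂ) →ₗ[ℂ] Fin N → ℂ) x = S₁ *ᵥ x := by
        simp [hf, Matrix.toLinAlgEquiv'_apply]
      rw [hfx]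
      calc S₁ *ᵥ (S₁ *ᵥ x) = (S₁ * S₁) *ᵥ x := by rw [Matrix.mulVec_mulVec]
        _ = Ψ₁ᵀ *ᵥ (S₁ *ᵥ x) - Ψ₂ᵀ *ᵥ x := by rw [e1, Matrix.sub_mulVec, Matrix.mulVec_mulVec]
        _ = Ψ₁ᵀ *ᵥ (S₂ *ᵥ x) - Ψ₂ᵀ *ᵥ x := by rw [hx]
        _ = (S₂ * S₂) *ᵥ x := by rw [e2, Matrix.sub_mulVec, Matrix.mulVec_mulVec]
        _ = S₂ *ᵥ (S₂ *ᵥ x) := by rw [Matrix.mulVec_mulVec]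
        _ = S₂ *ᵥ (S₁ *ᵥ x) := by rw [hx]
    haveI : Nontrivial K := ⟨⟨⟨v, hvK⟩, 0, by simpa using hv⟩⟩
    obtain ⟨μ, hμ⟩ := Module.End.exists_eigenvalue
      (((f : (Fin N → ℂ) →ₗ[ℂ] Fin N → ℂ)).restrict hinv)
    obtain ⟨w, hw⟩ := hμ.exists_hasEigenvector
    have hw0 : (w : Fin N → ℂ) ≠ 0 := fun h => hw.2 (Subtype.ext h)
    have hfw : (f : (Fin N → ℂ) →ₗ[ℂ] Fin N → ℂ) (w : Fin N → ℂ) = μ • (w : Fin N → ℂ) := by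
      have := hw.apply_eq_smul
      exact congrArg Subtype.val this
    have hgw : (g : (Fin N → ℂ) →ₗ[ℂ] Fin N → ℂ) (w : Fin N → ℂ) = μ • (w : Fin N → ℂ) := by
      have hwK : (w : Fin N → ℂ) ∈ K := w.2
      rw [memK] at hwK
      have : (g : (Fin N → ℂ) →ₗ[ℂ] Fin N → ℂ) (w : Fin N → ℂ)
          = (f : (Fin N → ℂ) →ₗ[ℂ] Fin N → ℂ) (w : Fin N → ℂ) := by
        simp [hf, hg, Matrix.toLinAlgEquiv'_apply, hwK]
      rw [this, hfw]
    have hμ1 : μ ∈ spectrum ℂ S₁ := by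
      rw [← AlgEquiv.spectrum_eq (Matrix.toLinAlgEquiv' (R := ℂ) (n := Fin N)) S₁,
        ← Module.End.hasEigenvalue_iff_mem_spectrum]
      exact Module.End.hasEigenvalue_of_hasEigenvector ⟨Module.End.mem_eigenspace_iff.mpr hfw, hw0⟩
    have hμ2 : μ ∈ spectrum ℂ S₂ := by
      rw [← AlgEquiv.spectrum_eq (Matrix.toLinAlgEquiv' (R := ℂ) (n := Fin N)) S₂,
        ← Module.End.hasEigenvalue_iff_mem_spectrum]
      exact Module.End.hasEigenvalue_of_hasEigenvector ⟨Module.End.mem_eigenspace_iff.mpr hgw, hw0⟩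
    exact lt_irrefl _ (hdom μ hμ2 μ hμ1)
  constructor
  · rw [Matrix.isUnit_iff_isUnit_det, Matrix.det_fromBlocks_one₁₁]
    simpa [Matrix.isUnit_iff_isUnit_det] using key
  · exact key
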